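/- Let I be an instance of SPA-ST. For any two super-stable matchings M1 and M2 in I, any lecturer l_k that is undersubscribed in M1, and any project p offered by l_k, the number of students assigned to p in M1 equals the number of students assigned to p in M2. -/

import Mathlib

open scoped Classical

/-- An instance of the Student-Project Allocation problem with lecturer
preferences over students, with Ties (SPA-ST).  `sPref s p q` means student `s`
ranks project `p` at least as highly as project `q` (`p ⪰_s q`); `lPref k t t'`
means lecturer `k` ranks student `t` at least as highly as student `t'`. -/
structure SPAST (S P L : Type) [Fintype S] [Fintype P] [Fintype L]
    [DecidableEq S] [DecidableEq P] [DecidableEq L] where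
  /-- the lecturer offering each project -/
  lec : P → L
  /-- project capacities -/
  c : P → ℕ
  /-- lecturer capacities -/
  d : L → ℕ
  cpos : ∀ p : P, 0 < c p
  dpos : ∀ k : L, 0 < d k
  /-- the set of projects acceptable to each student -/
  acc : S → Finset P
  sPref : S → P → P → Prop
  lPref : L → S → S → Prop
  sRefl : ∀ s : S, ∀ p ∈ acc s, sPref s p p
  sTrans : ∀ s : S, ∀ p ∈ acc s, ∀ q ∈ acc s, ∀ r ∈ acc s,
    sPref s p q → sPref s q r → sPref s p r
  sTotal : ∀ s : S, ∀ p ∈ acc s, ∀ q ∈ acc s, sPref s p q ∨ sPref s q p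
  lRefl : ∀ k : L, ∀ t : S, (∃ p ∈ acc t, lec p = k) → lPref k t t
  lTrans : ∀ k : L, ∀ t1 t2 t3 : S,
    (∃ p ∈ acc t1, lec p = k) → (∃ p ∈ acc t2, lec p = k) → (∃ p ∈ acc t3, lec p = k) →
    lPref k t1 t2 → lPref k t2 t3 → lPref k t1 t3
  lTotal : ∀ k : L, ∀ t1 t2 : S,
    (∃ p ∈ acc t1, lec p = k) → (∃ p ∈ acc t2, lec p = k) →
    lPref k t1 t2 ∨ lPref k t2 t1
  capLB : ∀ p : P, c p ≤ d (lec p)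
  capUB : ∀ k : L, d k ≤ ∑ p ∈ Finset.univ.filter (fun p => lec p = k), c p

namespace SPAST

variable {S P L : Type} [Fintype S] [Fintype P] [Fintype L]
  [DecidableEq S] [DecidableEq P] [DecidableEq L]

/-- `M` is a matching: pairs are acceptable, each student is matched at most once,
and project and lecturer capacities are respected. -/
def IsMatching (I : SPAST S P L) (M : Finset (S × P)) : Prop :=
  (∀ x ∈ M, x.2 ∈ I.acc x.1) ∧
  (∀ s : S, ∀ p q : P, (s, p) ∈ M → (s, q) ∈ M → p = q) ∧
  (∀ p : P, (M.filter (fun x => x.2 = p)).card ≤ I.c p) ∧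
  (∀ k : L, (M.filter (fun x => I.lec x.2 = k)).card ≤ I.d k)

/-- The set `M(p)` of students assigned to project `p` in `M`. -/
def projAsg (M : Finset (S × P)) (p : P) : Finset S :=
  (M.filter (fun x => x.2 = p)).image Prod.fst

/-- The set `M(l_k)` of students assigned to lecturer `k` in `M`. -/
def lecAsg (I : SPAST S P L) (M : Finset (S × P)) (k : L) : Finset S :=
  (M.filter (fun x => I.lec x.2 = k)).image Prod.fst

/-- `t` is a least-preferred (worst) student of lecturer `k` in the set `T`. -/
def WorstIn (I : SPAST S P L) (k : L) (T : Finset S) (t : S) : Prop :=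
  t ∈ T ∧ ∀ t' ∈ T, I.lPref k t' t

/-- `(s, p)` is a super-blocking pair for `M`. -/
def SuperBlocking (I : SPAST S P L) (M : Finset (S × P)) (s : S) (p : P) : Prop :=
  p ∈ I.acc s ∧ (s, p) ∉ M ∧
  (∀ q : P, (s, q) ∈ M → ¬(I.sPref s q p ∧ ¬I.sPref s p q)) ∧
  (((projAsg M p).card < I.c p ∧ (lecAsg I M (I.lec p)).card < I.d (I.lec p)) ∨
   ((projAsg M p).card < I.c p ∧ (lecAsg I M (I.lec p)).card = I.d (I.lec p) ∧
     (s ∈ lecAsg I M (I.lec p) ∨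
      ∃ t : S, WorstIn I (I.lec p) (lecAsg I M (I.lec p)) t ∧ I.lPref (I.lec p) s t)) ∨
   ((projAsg M p).card = I.c p ∧
     ∃ t : S, WorstIn I (I.lec p) (projAsg M p) t ∧ I.lPref (I.lec p) s t))

/-- `(s, p)` is a weakly-blocking pair for `M`. -/
def WeakBlocking (I : SPAST S P L) (M : Finset (S × P)) (s : S) (p : P) : Prop :=
  p ∈ I.acc s ∧ (s, p) ∉ M ∧
  (∀ q : P, (s, q) ∈ M → I.sPref s p q ∧ ¬I.sPref s q p) ∧
  (((projAsg M p).card < I.c p ∧ (lecAsg I M (I.lec p)).card < I.d (I.lec p)) ∨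
   ((projAsg M p).card < I.c p ∧ (lecAsg I M (I.lec p)).card = I.d (I.lec p) ∧
     (s ∈ lecAsg I M (I.lec p) ∨
      ∃ t : S, WorstIn I (I.lec p) (lecAsg I M (I.lec p)) t ∧
        (I.lPref (I.lec p) s t ∧ ¬I.lPref (I.lec p) t s))) ∨
   ((projAsg M p).card = I.c p ∧
     ∃ t : S, WorstIn I (I.lec p) (projAsg M p) t ∧
       (I.lPref (I.lec p) s t ∧ ¬I.lPref (I.lec p) t s)))

/-- `M` is a super-stable matching in `I`. -/
def SuperStable (I : SPAST S P L) (M : Finset (S × P)) : Prop :=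
  I.IsMatching M ∧ ∀ (s : S) (p : P), ¬SuperBlocking I M s p

/-- `M` is a weakly stable matching in `I`. -/
def WeaklyStable (I : SPAST S P L) (M : Finset (S × P)) : Prop :=
  I.IsMatching M ∧ ∀ (s : S) (p : P), ¬WeakBlocking I M s p

/-- `I` is an SPA-S instance: all preference lists are strictly ordered
(the preorders are antisymmetric). -/
def StrictPrefs (I : SPAST S P L) : Prop :=
  (∀ s : S, ∀ p ∈ I.acc s, ∀ q ∈ I.acc s, I.sPref s p q → I.sPref s q p → p = q) ∧
  (∀ k : L, ∀ t t' : S, (∃ p ∈ I.acc t, I.lec p = k) → (∃ p ∈ I.acc t', I.lec p = k) →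
    I.lPref k t t' → I.lPref k t' t → t = t')

/-- `I'` is an SPA-S instance obtained from `I` by breaking the ties. -/
def TieBreaking (I I' : SPAST S P L) : Prop :=
  I'.lec = I.lec ∧ I'.c = I.c ∧ I'.d = I.d ∧ I'.acc = I.acc ∧
  StrictPrefs I' ∧
  (∀ (s : S) (p q : P), I.sPref s p q → ¬I.sPref s q p →
    I'.sPref s p q ∧ ¬I'.sPref s q p) ∧
  (∀ (k : L) (t t' : S), I.lPref k t t' → ¬I.lPref k t' t →
    I'.lPref k t t' ∧ ¬I'.lPref k t' t)

end SPAST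

section RuralHospitalsAux

open SPAST Finset

variable {S P L : Type} [Fintype S] [Fintype P] [Fintype L]
  [DecidableEq S] [DecidableEq P] [DecidableEq L]

/-- strict student preference: `q ≻_s p` -/
def sQ (I : SPAST S P L) (s : S) (q p : P) : Prop := I.sPref s q p ∧ ¬ I.sPref s p q

/-- strict lecturer preference: `t ≻_k u` -/
def lQ (I : SPAST S P L) (k : L) (t u : S) : Prop := I.lPref k t u ∧ ¬ I.lPref k u t

lemma lQ_asymm {I : SPAST S P L} {k : L} {t u : S} (h : lQ I k t u) (h' : lQ I k u t) :
    False := h.2 h'.1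

lemma sQ_asymm {I : SPAST S P L} {s : S} {q p : P} (h : sQ I s q p) (h' : sQ I s p q) :
    False := h.2 h'.1

/-- The edge `e` of `M` is of type A relative to the other matching `N`:
its student strictly prefers its `N`-partner. -/
def isA (I : SPAST S P L) (N : Finset (S × P)) (e : S × P) : Prop :=
  ∃ q, (e.1, q) ∈ N ∧ sQ I e.1 q e.2

/-- Type B relative to `N` : the project is full in `N` and every student assigned
to it in `N` is strictly preferred to `e.1`. -/
def isB (I : SPAST S P L) (N : Finset (S × P)) (e : S × P) : Prop :=
  (projAsg N e.2).card = I.c e.2 ∧ ∀ t ∈ projAsg N e.2, lQ I (I.lec e.2) t e.1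

/-- Type C relative to `N` : the lecturer is full in `N`, `e.1` is not assigned to the
lecturer in `N`, and every student of the lecturer in `N` is strictly preferred. -/
def isC (I : SPAST S P L) (N : Finset (S × P)) (e : S × P) : Prop :=
  (lecAsg I N (I.lec e.2)).card = I.d (I.lec e.2) ∧ e.1 ∉ lecAsg I N (I.lec e.2) ∧
    ∀ t ∈ lecAsg I N (I.lec e.2), lQ I (I.lec e.2) t e.1

lemma mem_projAsg' {M : Finset (S × P)} {t : S} {p : P} :
    t ∈ projAsg M p ↔ (t, p) ∈ M := by
  constructor
  · intro h
    rw [projAsg, mem_image] at h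
    obtain ⟨⟨a, b⟩, hx, rfl⟩ := h
    rw [mem_filter] at hx
    obtain ⟨h1, h2⟩ := hx
    have h2' : b = p := h2
    subst h2'
    exact h1
  · intro h
    rw [projAsg, mem_image]
    exact ⟨(t, p), by simp [mem_filter, h], rfl⟩

lemma mem_lecAsg' {I : SPAST S P L} {M : Finset (S × P)} {t : S} {k : L} :
    t ∈ lecAsg I M k ↔ ∃ q, (t, q) ∈ M ∧ I.lec q = k := by
  constructor
  · intro h
    rw [lecAsg, mem_image] at h
    obtain ⟨⟨a, b⟩, hx, rfl⟩ := h
    rw [mem_filter] at hx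
    exact ⟨b, hx.1, hx.2⟩
  · rintro ⟨q, hq, hlec⟩
    rw [lecAsg, mem_image]
    exact ⟨(t, q), by simp [mem_filter, hq, hlec], rfl⟩

lemma projAsg_card (M : Finset (S × P)) (p : P) :
    (projAsg M p).card = (M.filter (fun x => x.2 = p)).card := by
  apply card_image_of_injOn
  intro x hx y hy hxy
  simp only [coe_filter, Set.mem_setOf_eq] at hx hy
  exact Prod.ext hxy (hx.2.trans hy.2.symm)

lemma lecAsg_card {I : SPAST S P L} {M : Finset (S × P)} (h : I.IsMatching M) (k : L) :
    (lecAsg I M k).card = (M.filter (fun x => I.lec x.2 = k)).card := by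
  apply card_image_of_injOn
  intro x hx y hy hxy
  simp only [coe_filter, Set.mem_setOf_eq] at hx hy
  exact Prod.ext hxy (h.2.1 x.1 x.2 y.2 (by simpa using hx.1) (by rw [hxy]; simpa using hy.1))

/-- existence of a worst student in a nonempty set -/
lemma exists_worst (I : SPAST S P L) (k : L) (T : Finset S) (hT : T.Nonempty)
    (hdom : ∀ t ∈ T, ∃ p ∈ I.acc t, I.lec p = k) :
    ∃ t0 ∈ T, ∀ t ∈ T, I.lPref k t t0 := by
  revert hdom
  induction hT using Finset.Nonempty.cons_induction with
  | singleton a =>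
      intro hdom
      refine ⟨a, by simp, ?_⟩
      intro t ht
      simp only [Finset.mem_singleton] at ht
      subst ht
      exact I.lRefl k t (hdom t (by simp))
  | cons a s ha hs ih =>
      intro hdom
      obtain ⟨t0, ht0, hworst⟩ := ih (fun t ht => hdom t (by simp [ht]))
      have hdoma := hdom a (by simp)
      have hdomt0 := hdom t0 (by simp [ht0])
      rcases I.lTotal k a t0 hdoma hdomt0 with h | h
      · refine ⟨t0, by simp [ht0], ?_⟩
        intro t ht
        rcases Finset.mem_cons.1 ht with rfl | ht
        · exact h
        · exact hworst t ht
      · refine ⟨a, by simp, ?_⟩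
        intro t ht
        rcases Finset.mem_cons.1 ht with rfl | ht
        · exact I.lRefl k t hdoma
        · exact I.lTrans k t t0 a (hdom t (by simp [ht])) hdomt0 hdoma (hworst t ht) h

end RuralHospitalsAux
section RuralHospitalsAux2

open SPAST Finset

set_option linter.unusedSectionVars false

variable {S P L : Type} [Fintype S] [Fintype P] [Fintype L]
  [DecidableEq S] [DecidableEq P] [DecidableEq L]

/-- main extraction from super-stability: a non-blocking acceptable pair outside `M`
whose student does not strictly prefer her `M`-partner is of type B or C. -/
lemma lemE {I : SPAST S P L} {M : Finset (S × P)} (hM : I.SuperStable M) {e : S × P}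
    (hacc : e.2 ∈ I.acc e.1) (hnm : e ∉ M) (hna : ¬ isA I M e) :
    isB I M e ∨ isC I M e := by
  obtain ⟨s, p⟩ := e
  simp only [isA, not_exists, not_and] at hna
  have hnb := hM.2 s p
  rw [SuperBlocking] at hnb
  push_neg at hnb
  have hcond : ∀ q : P, (s, q) ∈ M → I.sPref s q p → I.sPref s p q := by
    intro q hq hqp
    by_contra hcon
    exact hna q hq ⟨hqp, hcon⟩
  have hdisj := hnb hacc hnm hcond
  obtain ⟨hd1, hd2, hd3⟩ := hdisj
  have hple : (projAsg M p).card ≤ I.c p := by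
    rw [projAsg_card]; exact hM.1.2.2.1 p
  have hlle : (lecAsg I M (I.lec p)).card ≤ I.d (I.lec p) := by
    rw [lecAsg_card hM.1]; exact hM.1.2.2.2 (I.lec p)
  have hdomP : ∀ t ∈ projAsg M p, ∃ q ∈ I.acc t, I.lec q = I.lec p := by
    intro t ht
    rw [mem_projAsg'] at ht
    exact ⟨p, hM.1.1 _ ht, rfl⟩
  have hdomL : ∀ t ∈ lecAsg I M (I.lec p), ∃ q ∈ I.acc t, I.lec q = I.lec p := by
    intro t ht
    rw [mem_lecAsg'] at ht
    obtain ⟨q, hq, hlq⟩ := ht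
    exact ⟨q, hM.1.1 _ hq, hlq⟩
  have hdoms : ∃ q ∈ I.acc s, I.lec q = I.lec p := ⟨p, hacc, rfl⟩
  rcases lt_or_eq_of_le hple with hlt | heq
  · -- project undersubscribed in M: type C
    right
    have hleq : (lecAsg I M (I.lec p)).card = I.d (I.lec p) :=
      le_antisymm hlle (hd1 hlt)
    have h2 := hd2 hlt hleq
    obtain ⟨hmem, hnex⟩ := h2
    have hne : (lecAsg I M (I.lec p)).Nonempty := by
      rw [← Finset.card_pos, hleq]; exact I.dpos _
    obtain ⟨t0, ht0, hworst⟩ := exists_worst I (I.lec p) _ hne hdomL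
    have hnps : ¬ I.lPref (I.lec p) s t0 := by
      intro hcon
      exact hnex t0 ⟨ht0, hworst⟩ hcon
    have hts : I.lPref (I.lec p) t0 s := by
      rcases I.lTotal (I.lec p) s t0 hdoms (hdomL t0 ht0) with h | h
      · exact absurd h hnps
      · exact h
    refine ⟨hleq, hmem, ?_⟩
    intro t ht
    refine ⟨I.lTrans (I.lec p) t t0 s (hdomL t ht) (hdomL t0 ht0) hdoms (hworst t ht) hts, ?_⟩
    intro hcon
    exact hnps (I.lTrans (I.lec p) s t t0 hdoms (hdomL t ht) (hdomL t0 ht0) hcon (hworst t ht))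
  · -- project full in M: type B
    left
    have hnex := hd3 heq
    have hne : (projAsg M p).Nonempty := by
      rw [← Finset.card_pos, heq]; exact I.cpos _
    obtain ⟨t0, ht0, hworst⟩ := exists_worst I (I.lec p) _ hne hdomP
    have hnps : ¬ I.lPref (I.lec p) s t0 := by
      intro hcon
      exact hnex t0 ⟨ht0, hworst⟩ hcon
    have hts : I.lPref (I.lec p) t0 s := by
      rcases I.lTotal (I.lec p) s t0 hdoms (hdomP t0 ht0) with h | h
      · exact absurd h hnps
      · exact h
    refine ⟨heq, ?_⟩
    intro t ht
    refine ⟨I.lTrans (I.lec p) t t0 s (hdomP t ht) (hdomP t0 ht0) hdoms (hworst t ht) hts, ?_⟩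
    intro hcon
    exact hnps (I.lTrans (I.lec p) s t t0 hdoms (hdomP t ht) (hdomP t0 ht0) hcon (hworst t ht))

/-- If `e ∈ M \ N` is of type B (beaten at its project in `N`), then every edge of
`N \ M` at the same project is of type A. -/
lemma G1 {I : SPAST S P L} {M N : Finset (S × P)} (hM : I.SuperStable M)
    (hN : I.SuperStable N) {e e' : S × P} (heM : e ∈ M \ N) (hB : isB I N e)
    (he' : e' ∈ N \ M) (hpp : e'.2 = e.2) : isA I M e' := by
  rw [mem_sdiff] at heM he'
  by_contra hna
  have hacc' : e'.2 ∈ I.acc e'.1 := hN.1.1 e' he'.1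
  have hsmem : e.1 ∈ projAsg M e.2 := by
    rw [mem_projAsg']
    exact (show (e.1, e.2) ∈ M by simpa using heM.1)
  have htmem : e'.1 ∈ projAsg N e.2 := by
    rw [mem_projAsg']
    rw [← hpp]
    exact (show (e'.1, e'.2) ∈ N by simpa using he'.1)
  have hts : lQ I (I.lec e.2) e'.1 e.1 := hB.2 e'.1 htmem
  rcases lemE hM hacc' he'.2 hna with hB' | hC'
  · -- e' of type B w.r.t. M : contradiction
    have := hB'.2 e.1 (by rw [hpp]; exact hsmem)
    rw [hpp] at this
    exact lQ_asymm this hts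
  · -- e' of type C w.r.t. M : contradiction
    have hsl : e.1 ∈ lecAsg I M (I.lec e.2) := by
      rw [mem_lecAsg']
      exact ⟨e.2, by simpa using heM.1, rfl⟩
    have := hC'.2.2 e.1 (by rw [hpp]; exact hsl)
    rw [hpp] at this
    exact lQ_asymm this hts

/-- splitting a filtered card over `M \ N` and `M ∩ N`. -/
lemma card_split (M N : Finset (S × P)) (q : S × P → Prop) [DecidablePred q] :
    ((M \ N).filter q).card + ((M ∩ N).filter q).card = (M.filter q).card := by
  rw [← Finset.card_union_of_disjoint, ← Finset.filter_union, Finset.sdiff_union_inter]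
  exact Finset.disjoint_filter_filter (Finset.disjoint_sdiff_inter M N)

/-- an injection between finsets of the same type exists whenever cards compare. -/
lemma exists_injOn_mapsTo {A B : Finset (S × P)} (h : A.card ≤ B.card) :
    ∃ f : S × P → S × P, Set.InjOn f ↑A ∧ ∀ a ∈ A, f a ∈ B := by
  obtain ⟨B', hsub, hcard⟩ := Finset.exists_subset_card_eq h
  have e := Finset.equivOfCardEq (show A.card = B'.card from hcard.symm)
  refine ⟨fun a => if h : a ∈ A then (e ⟨a, h⟩ : S × P) else a, ?_, ?_⟩
  · intro a ha b hb hab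
    simp only [Finset.mem_coe] at ha hb
    simp only [dif_pos ha, dif_pos hb] at hab
    have := e.injective (Subtype.ext hab)
    exact congrArg Subtype.val this
  · intro a ha
    simp only [dif_pos ha]
    exact hsub (e ⟨a, ha⟩).2

/-- counting preimages under an injection that is in fact a bijection by cardinality. -/
lemma preimage_card {A B C : Finset (S × P)} {f : S × P → S × P}
    (hinj : Set.InjOn f ↑A) (hmap : ∀ a ∈ A, f a ∈ B) (hcard : B.card ≤ A.card)
    (hC : C ⊆ B) : (A.filter (fun a => f a ∈ C)).card = C.card := by
  have himage : A.image f = B := by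
    apply Finset.eq_of_subset_of_card_le
    · intro b hb
      rw [Finset.mem_image] at hb
      obtain ⟨a, ha, rfl⟩ := hb
      exact hmap a ha
    · rw [Finset.card_image_of_injOn hinj]
      exact hcard
  have : (A.filter (fun a => f a ∈ C)).image f = C := by
    apply Finset.Subset.antisymm
    · intro b hb
      rw [Finset.mem_image] at hb
      obtain ⟨a, ha, rfl⟩ := hb
      exact (Finset.mem_filter.1 ha).2
    · intro c hc
      have : c ∈ A.image f := himage ▸ hC hc
      rw [Finset.mem_image] at this
      obtain ⟨a, ha, rfl⟩ := this
      rw [Finset.mem_image]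
      exact ⟨a, Finset.mem_filter.2 ⟨ha, hc⟩, rfl⟩
  calc (A.filter (fun a => f a ∈ C)).card
      = ((A.filter (fun a => f a ∈ C)).image f).card :=
        (Finset.card_image_of_injOn (hinj.mono (by intro x hx; simp only [Finset.coe_filter, Set.mem_setOf_eq] at hx; exact hx.1))).symm
    _ = C.card := by rw [this]

end RuralHospitalsAux2
section RuralHospitalsAux3

open SPAST Finset

set_option linter.unusedSectionVars false

variable {S P L : Type} [Fintype S] [Fintype P] [Fintype L]
  [DecidableEq S] [DecidableEq P] [DecidableEq L]

/-- An edge of `N \ M` is `Aowned` if its student has an `M \ N` edge of type A. -/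
def Aowned (I : SPAST S P L) (M N : Finset (S × P)) (e' : S × P) : Prop :=
  ∃ r, (e'.1, r) ∈ M \ N ∧ isA I N (e'.1, r)

lemma notAowned_of_isAM {I : SPAST S P L} {M N : Finset (S × P)}
    (hM : I.IsMatching M) (hN : I.IsMatching N) {e' : S × P} (he' : e' ∈ N \ M)
    (hA : isA I M e') : ¬ Aowned I M N e' := by
  rintro ⟨r, hr, hrA⟩
  obtain ⟨r', hr'N, hr'Q⟩ := hA
  obtain ⟨q, hqN, hqQ⟩ := hrA
  rw [mem_sdiff] at hr he'
  have hrr' : r' = r := hM.2.1 e'.1 r' r hr'N hr.1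
  have hq : q = e'.2 := by
    refine hN.2.1 e'.1 q e'.2 hqN ?_
    have := he'.1
    simpa using this
  rw [hrr'] at hr'Q
  rw [hq] at hqQ
  exact sQ_asymm hr'Q hqQ

lemma card_pool_ge {I : SPAST S P L} {M N : Finset (S × P)}
    (hM : I.IsMatching M) {p : P} (hfull : (projAsg N p).card = I.c p) :
    ((M \ N).filter (fun e => e.2 = p)).card ≤ ((N \ M).filter (fun e => e.2 = p)).card := by
  have h1 := card_split M N (fun e : S × P => e.2 = p)
  have h2 := card_split N M (fun e : S × P => e.2 = p)
  have hcomm : ((M ∩ N).filter (fun e : S × P => e.2 = p)).card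
      = ((N ∩ M).filter (fun e : S × P => e.2 = p)).card := by
    rw [Finset.inter_comm]
  have hM' : (M.filter (fun e : S × P => e.2 = p)).card ≤ I.c p := hM.2.2.1 p
  have hN' : (N.filter (fun e : S × P => e.2 = p)).card = I.c p := by
    rw [← projAsg_card]; exact hfull
  omega

lemma card_poolL_ge {I : SPAST S P L} {M N : Finset (S × P)}
    (hM : I.IsMatching M) (hN : I.IsMatching N) {l : L}
    (hfull : (lecAsg I N l).card = I.d l) :
    ((M \ N).filter (fun e => I.lec e.2 = l)).card
      ≤ ((N \ M).filter (fun e => I.lec e.2 = l)).card := by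
  have h1 := card_split M N (fun e : S × P => I.lec e.2 = l)
  have h2 := card_split N M (fun e : S × P => I.lec e.2 = l)
  have hcomm : ((M ∩ N).filter (fun e : S × P => I.lec e.2 = l)).card
      = ((N ∩ M).filter (fun e : S × P => I.lec e.2 = l)).card := by
    rw [Finset.inter_comm]
  have hM' : (M.filter (fun e : S × P => I.lec e.2 = l)).card ≤ I.d l := hM.2.2.2 l
  have hN' : (N.filter (fun e : S × P => I.lec e.2 = l)).card = I.d l := by
    rw [← lecAsg_card hN]; exact hfull
  omega

lemma card_partition2 (A : Finset (S × P)) (w u : S × P → Prop)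
    [DecidablePred w] [DecidablePred u] :
    (A.filter (fun e => w e ∧ u e)).card + (A.filter (fun e => w e ∧ ¬ u e)).card
      = (A.filter w).card := by
  have h := Finset.card_filter_add_card_filter_not (s := A.filter w) (p := u)
  rwa [Finset.filter_filter, Finset.filter_filter] at h

lemma card_filter_congr {A : Finset (S × P)} {u v : S × P → Prop}
    [DecidablePred u] [DecidablePred v]
    (h : ∀ e ∈ A, u e ↔ v e) : (A.filter u).card = (A.filter v).card := by
  rw [Finset.filter_congr h]

/-- injections at a project for type-B edges -/
lemma sigma_ex {I : SPAST S P L} {M N : Finset (S × P)}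
    (hM : I.SuperStable M) (hN : I.SuperStable N) (p : P) :
    ∃ g : S × P → S × P,
      Set.InjOn g ↑((M \ N).filter (fun e => ¬ isA I N e ∧ isB I N e ∧ e.2 = p)) ∧
      ∀ e ∈ (M \ N).filter (fun e => ¬ isA I N e ∧ isB I N e ∧ e.2 = p),
        g e ∈ (N \ M).filter (fun e' => e'.2 = p) := by
  by_cases hne : ((M \ N).filter (fun e => ¬ isA I N e ∧ isB I N e ∧ e.2 = p)).Nonempty
  · obtain ⟨e0, he0⟩ := hne
    rw [mem_filter] at he0
    have hfull : (projAsg N p).card = I.c p := by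
      have := he0.2.2.1.1
      rwa [he0.2.2.2] at this
    have hc1 : ((M \ N).filter (fun e => ¬ isA I N e ∧ isB I N e ∧ e.2 = p)).card
        ≤ ((M \ N).filter (fun e : S × P => e.2 = p)).card := by
      apply Finset.card_le_card
      intro e he
      rw [mem_filter] at he ⊢
      exact ⟨he.1, he.2.2.2⟩
    have hc2 := card_pool_ge hM.1 (N := N) hfull
    exact exists_injOn_mapsTo (le_trans hc1 hc2)
  · refine ⟨id, ?_, ?_⟩
    · intro a ha b hb hab
      exact hab
    · intro e he
      exact absurd ⟨e, he⟩ hne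

/-- the B*-ledger injection: type-B edges of `N \ M` at lecturer `k` inject into
type-A edges of `M \ N` at the same project. -/
lemma bstar_ex {I : SPAST S P L} {M N : Finset (S × P)}
    (hM : I.SuperStable M) (hN : I.SuperStable N) (k : L) :
    ∃ φ : S × P → S × P,
      Set.InjOn φ ↑((N \ M).filter (fun e => I.lec e.2 = k ∧ isB I M e)) ∧
      ∀ e ∈ (N \ M).filter (fun e => I.lec e.2 = k ∧ isB I M e),
        φ e ∈ M \ N ∧ (φ e).2 = e.2 ∧ isA I N (φ e) := by
  have hq : ∀ q : P, ∃ g : S × P → S × P,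
      Set.InjOn g ↑((N \ M).filter (fun e => (I.lec e.2 = k ∧ isB I M e) ∧ e.2 = q)) ∧
      ∀ e ∈ (N \ M).filter (fun e => (I.lec e.2 = k ∧ isB I M e) ∧ e.2 = q),
        g e ∈ (M \ N).filter (fun e' => e'.2 = q) := by
    intro q
    by_cases hne : ((N \ M).filter (fun e => (I.lec e.2 = k ∧ isB I M e) ∧ e.2 = q)).Nonempty
    · obtain ⟨e0, he0⟩ := hne
      rw [mem_filter] at he0
      have hfull : (projAsg M q).card = I.c q := by
        have := he0.2.1.2.1
        rwa [he0.2.2] at this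
      have hc1 : ((N \ M).filter (fun e => (I.lec e.2 = k ∧ isB I M e) ∧ e.2 = q)).card
          ≤ ((N \ M).filter (fun e : S × P => e.2 = q)).card := by
        apply Finset.card_le_card
        intro e he
        rw [mem_filter] at he ⊢
        exact ⟨he.1, he.2.2⟩
      have hc2 := card_pool_ge hN.1 (N := M) hfull
      exact exists_injOn_mapsTo (le_trans hc1 hc2)
    · refine ⟨id, fun a _ b _ hab => hab, fun e he => absurd ⟨e, he⟩ hne⟩
  choose G hG1 hG2 using hq
  refine ⟨fun e => G e.2 e, ?_, ?_⟩
  · intro a ha b hb hab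
    have hab' : G a.2 a = G b.2 b := hab
    simp only [Finset.mem_coe, mem_filter] at ha hb
    have hamem : a ∈ (N \ M).filter (fun e => (I.lec e.2 = k ∧ isB I M e) ∧ e.2 = a.2) := by
      rw [mem_filter]; exact ⟨ha.1, ⟨ha.2.1, ha.2.2⟩, rfl⟩
    have hbmem : b ∈ (N \ M).filter (fun e => (I.lec e.2 = k ∧ isB I M e) ∧ e.2 = b.2) := by
      rw [mem_filter]; exact ⟨hb.1, ⟨hb.2.1, hb.2.2⟩, rfl⟩
    have ha2 : (G a.2 a).2 = a.2 := by
      have := hG2 a.2 a hamem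
      rw [mem_filter] at this
      exact this.2
    have hb2 : (G b.2 b).2 = b.2 := by
      have := hG2 b.2 b hbmem
      rw [mem_filter] at this
      exact this.2
    have hab2 : a.2 = b.2 := by rw [← ha2, ← hb2, hab']
    refine hG1 a.2 (Finset.mem_coe.2 hamem) ?_ ?_
    · rw [Finset.mem_coe, hab2]
      exact hbmem
    · have hgb : G a.2 b = G b.2 b := by rw [hab2]
      rw [hgb]
      exact hab'
  · intro e he
    rw [mem_filter] at he
    have hemem : e ∈ (N \ M).filter (fun e' => (I.lec e'.2 = k ∧ isB I M e') ∧ e'.2 = e.2) := by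
      rw [mem_filter]; exact ⟨he.1, ⟨he.2.1, he.2.2⟩, rfl⟩
    have h2 := hG2 e.2 e hemem
    rw [mem_filter] at h2
    refine ⟨h2.1, h2.2, ?_⟩
    exact G1 hN hM he.1 he.2.2 h2.1 h2.2
  
end RuralHospitalsAux3
section RuralHospitalsAux4

open SPAST Finset

set_option linter.unusedSectionVars false
set_option maxHeartbeats 800000

variable {S P L : Type} [Fintype S] [Fintype P] [Fintype L]
  [DecidableEq S] [DecidableEq P] [DecidableEq L]

lemma tau_ex {I : SPAST S P L} {M N : Finset (S × P)}
    (hM : I.SuperStable M) (hN : I.SuperStable N) (Gb : P → S × P → S × P)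
    (hGb1 : ∀ p, Set.InjOn (Gb p)
      ↑((M \ N).filter (fun e => ¬ isA I N e ∧ isB I N e ∧ e.2 = p)))
    (hGb2 : ∀ p, ∀ e ∈ (M \ N).filter (fun e => ¬ isA I N e ∧ isB I N e ∧ e.2 = p),
      Gb p e ∈ (N \ M).filter (fun e' => e'.2 = p)) (l : L) :
    ∃ g : S × P → S × P,
      Set.InjOn g ↑((M \ N).filter (fun e => I.lec e.2 = l ∧ ¬ isA I N e ∧ ¬ isB I N e)) ∧
      ∀ e ∈ (M \ N).filter (fun e => I.lec e.2 = l ∧ ¬ isA I N e ∧ ¬ isB I N e),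
        g e ∈ ((N \ M).filter (fun e' => I.lec e'.2 = l ∧ ¬ Aowned I M N e')) \
          (((M \ N).filter (fun e => I.lec e.2 = l ∧ ¬ isA I N e ∧ isB I N e)).image
            (fun e => Gb e.2 e)) := by
  by_cases hne : ((M \ N).filter
      (fun e => I.lec e.2 = l ∧ ¬ isA I N e ∧ ¬ isB I N e)).Nonempty
  swap
  · exact ⟨id, fun a _ b _ hab => hab, fun e he => absurd ⟨e, he⟩ hne⟩
  obtain ⟨e0, he0⟩ := hne
  rw [mem_filter] at he0
  obtain ⟨he0M, he0l, he0A, he0B⟩ := he0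
  have he0M' := mem_sdiff.1 he0M
  have hC0 : isC I N e0 := by
    rcases lemE hN (hM.1.1 e0 he0M'.1) he0M'.2 he0A with hB | hC
    · exact absurd hB he0B
    · exact hC
  have hNfull : (lecAsg I N l).card = I.d l := by
    have := hC0.1
    rwa [he0l] at this
  -- the B* ledger injection
  obtain ⟨φ, hφ1, hφ2⟩ := bstar_ex hM hN l
  -- A-owned edges at l are of type B w.r.t. M
  have hAOsub : ∀ e' ∈ (N \ M).filter (fun e' => I.lec e'.2 = l ∧ Aowned I M N e'),
      e' ∈ (N \ M).filter (fun e' => I.lec e'.2 = l ∧ isB I M e') := by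
    intro e' he'
    rw [mem_filter] at he' ⊢
    obtain ⟨he'NM, he'l, r, hr, hrA⟩ := he'
    have he'NM' := mem_sdiff.1 he'NM
    refine ⟨he'NM, he'l, ?_⟩
    have hnA : ¬ isA I M e' := by
      rintro ⟨r', hr'M, hr'Q⟩
      obtain ⟨q'', hq''N, hq''Q⟩ := hrA
      have hrr : r' = r := hM.1.2.1 e'.1 r' r hr'M (mem_sdiff.1 hr).1
      have hq2 : q'' = e'.2 := hN.1.2.1 e'.1 q'' e'.2 hq''N (by simpa using he'NM'.1)
      rw [hrr] at hr'Q
      rw [hq2] at hq''Q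
      exact sQ_asymm hq''Q hr'Q
    rcases lemE hM (hN.1.1 e' he'NM'.1) he'NM'.2 hnA with hB | hC
    · exact hB
    · exfalso
      have hs0 : e0.1 ∈ lecAsg I M (I.lec e'.2) := by
        rw [mem_lecAsg']
        exact ⟨e0.2, by simpa using he0M'.1, by rw [he0l, he'l]⟩
      have h1 := hC.2.2 e0.1 hs0
      have he'1mem : e'.1 ∈ lecAsg I N (I.lec e0.2) := by
        rw [mem_lecAsg']
        exact ⟨e'.2, by simpa using he'NM'.1, by rw [he'l, he0l]⟩
      have h2 := hC0.2.2 e'.1 he'1mem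
      rw [he'l] at h1
      rw [he0l] at h2
      exact lQ_asymm h1 h2
  -- counting
  have hAOcard : ((N \ M).filter (fun e' => I.lec e'.2 = l ∧ Aowned I M N e')).card
      ≤ ((M \ N).filter (fun e => I.lec e.2 = l ∧ isA I N e)).card := by
    apply Finset.card_le_card_of_injOn φ
    · intro e' he'
      have hBst := hAOsub e' he'
      obtain ⟨hm, hsnd, hA⟩ := hφ2 e' hBst
      rw [mem_filter] at hBst
      rw [Finset.mem_coe, mem_filter]
      refine ⟨hm, ?_, hA⟩
      rw [hsnd]
      exact hBst.2.1
    · exact hφ1.mono (by intro x hx; exact Finset.mem_coe.2 (hAOsub x (Finset.mem_coe.1 hx)))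
  have hLle := card_poolL_ge hM.1 hN.1 hNfull (M := M) (N := N) (l := l)
  have hsplit1 := card_partition2 (M \ N) (fun e => I.lec e.2 = l) (fun e => isA I N e)
  have hsplit2 := card_partition2 (M \ N) (fun e => I.lec e.2 = l ∧ ¬ isA I N e)
    (fun e => isB I N e)
  have hb1 : ((M \ N).filter (fun e => (I.lec e.2 = l ∧ ¬ isA I N e) ∧ isB I N e)).card
      = ((M \ N).filter (fun e => I.lec e.2 = l ∧ ¬ isA I N e ∧ isB I N e)).card :=
    card_filter_congr (by intro e _; tauto)
  have hb2 : ((M \ N).filter (fun e => (I.lec e.2 = l ∧ ¬ isA I N e) ∧ ¬ isB I N e)).card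
      = ((M \ N).filter (fun e => I.lec e.2 = l ∧ ¬ isA I N e ∧ ¬ isB I N e)).card :=
    card_filter_congr (by intro e _; tauto)
  have hsplit3 := card_partition2 (N \ M) (fun e' => I.lec e'.2 = l)
    (fun e' => Aowned I M N e')
  have hb3 : ((N \ M).filter (fun e' => I.lec e'.2 = l ∧ ¬ Aowned I M N e')).card
      = ((N \ M).filter (fun e' => I.lec e'.2 = l ∧ ¬ Aowned I M N e')).card := rfl
  -- the image of the type-B injection inside the good pool
  have himginj : Set.InjOn (fun e => Gb e.2 e)
      ↑((M \ N).filter (fun e => I.lec e.2 = l ∧ ¬ isA I N e ∧ isB I N e)) := by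
    intro a ha b hb hab
    have hab' : Gb a.2 a = Gb b.2 b := hab
    simp only [Finset.mem_coe, mem_filter] at ha hb
    have hamem : a ∈ (M \ N).filter (fun e => ¬ isA I N e ∧ isB I N e ∧ e.2 = a.2) := by
      rw [mem_filter]; exact ⟨ha.1, ha.2.2.1, ha.2.2.2, rfl⟩
    have hbmem : b ∈ (M \ N).filter (fun e => ¬ isA I N e ∧ isB I N e ∧ e.2 = b.2) := by
      rw [mem_filter]; exact ⟨hb.1, hb.2.2.1, hb.2.2.2, rfl⟩
    have ha2 : (Gb a.2 a).2 = a.2 := by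
      have := hGb2 a.2 a hamem
      rw [mem_filter] at this
      exact this.2
    have hb2' : (Gb b.2 b).2 = b.2 := by
      have := hGb2 b.2 b hbmem
      rw [mem_filter] at this
      exact this.2
    have hab2 : a.2 = b.2 := by rw [← ha2, ← hb2', hab']
    refine hGb1 a.2 (Finset.mem_coe.2 hamem) ?_ ?_
    · rw [Finset.mem_coe, hab2]
      exact hbmem
    · have hgb : Gb a.2 b = Gb b.2 b := by rw [hab2]
      rw [hgb]
      exact hab'
  have himgsub : (((M \ N).filter (fun e => I.lec e.2 = l ∧ ¬ isA I N e ∧ isB I N e)).image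
      (fun e => Gb e.2 e)) ⊆ (N \ M).filter (fun e' => I.lec e'.2 = l ∧ ¬ Aowned I M N e') := by
    intro t ht
    rw [mem_image] at ht
    obtain ⟨e, he, rfl⟩ := ht
    rw [mem_filter] at he
    obtain ⟨heM, hel, heA, heB⟩ := he
    have hedp : e ∈ (M \ N).filter (fun e' => ¬ isA I N e' ∧ isB I N e' ∧ e'.2 = e.2) := by
      rw [mem_filter]; exact ⟨heM, heA, heB, rfl⟩
    have h2 := hGb2 e.2 e hedp
    rw [mem_filter] at h2
    have hA' : isA I M (Gb e.2 e) := G1 hM hN heM heB h2.1 h2.2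
    rw [mem_filter]
    refine ⟨h2.1, by rw [h2.2]; exact hel, notAowned_of_isAM hM.1 hN.1 h2.1 hA'⟩
  have himgcard : (((M \ N).filter (fun e => I.lec e.2 = l ∧ ¬ isA I N e ∧ isB I N e)).image
      (fun e => Gb e.2 e)).card
      = ((M \ N).filter (fun e => I.lec e.2 = l ∧ ¬ isA I N e ∧ isB I N e)).card :=
    Finset.card_image_of_injOn himginj
  have hsd := Finset.card_sdiff_add_card_eq_card himgsub
  apply exists_injOn_mapsTo
  omega

end RuralHospitalsAux4
section RuralHospitalsAux5

open SPAST Finset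

set_option linter.unusedSectionVars false
set_option maxHeartbeats 1600000

variable {S P L : Type} [Fintype S] [Fintype P] [Fintype L]
  [DecidableEq S] [DecidableEq P] [DecidableEq L]

/-- The global successor injection from `M \ N` into `N \ M`. -/
lemma exists_succ {I : SPAST S P L} {M N : Finset (S × P)}
    (hM : I.SuperStable M) (hN : I.SuperStable N) :
    ∃ f : S × P → S × P, Set.InjOn f ↑(M \ N) ∧ (∀ e ∈ M \ N, f e ∈ N \ M) ∧
      (∀ e ∈ M \ N, isA I N e → (f e).1 = e.1 ∧ f e ∈ N) ∧
      (∀ e ∈ M \ N, ¬ isA I N e → isB I N e → (f e).2 = e.2) ∧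
      (∀ e ∈ M \ N, ¬ isA I N e → ¬ isB I N e → I.lec (f e).2 = I.lec e.2) := by
  choose Gb hGb1 hGb2 using sigma_ex hM hN
  choose Gc hGc1 hGc2 using tau_ex hM hN Gb hGb1 hGb2
  set f : S × P → S × P := fun e =>
    if isA I N e then (e.1, if h : ∃ q, (e.1, q) ∈ N then h.choose else e.2)
    else if isB I N e then Gb e.2 e else Gc (I.lec e.2) e with hf
  -- case A facts
  have hA_t : ∀ e ∈ M \ N, isA I N e →
      f e ∈ N \ M ∧ (f e).1 = e.1 ∧ Aowned I M N (f e) := by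
    intro e heMN hA
    have heM := mem_sdiff.1 heMN
    obtain ⟨q, hqN, hqQ⟩ := hA
    have hex : ∃ q', (e.1, q') ∈ N := ⟨q, hqN⟩
    have hfe : f e = (e.1, hex.choose) := by
      rw [hf]
      simp only [if_pos (show isA I N e from ⟨q, hqN, hqQ⟩), dif_pos hex]
    have hchN : (e.1, hex.choose) ∈ N := hex.choose_spec
    have hqe : q = hex.choose := hN.1.2.1 e.1 q _ hqN hchN
    have hchQ : sQ I e.1 hex.choose e.2 := by rw [← hqe]; exact hqQ
    have hnotM : (e.1, hex.choose) ∉ M := by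
      intro hcon
      have : hex.choose = e.2 := hM.1.2.1 e.1 _ e.2 hcon (by simpa using heM.1)
      rw [this] at hchQ
      exact hchQ.2 hchQ.1
    refine ⟨by rw [hfe]; exact mem_sdiff.2 ⟨hchN, hnotM⟩, by rw [hfe], ?_⟩
    rw [hfe]
    refine ⟨e.2, by simpa using heMN, ?_⟩
    simp only
    exact ⟨q, hqN, hqQ⟩
  -- case B facts
  have hB_t : ∀ e ∈ M \ N, ¬ isA I N e → isB I N e →
      f e ∈ N \ M ∧ (f e).2 = e.2 ∧ ¬ Aowned I M N (f e) := by
    intro e heMN hnA hB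
    have hfe : f e = Gb e.2 e := by
      rw [hf]; simp only [if_neg hnA, if_pos hB]
    have hedp : e ∈ (M \ N).filter (fun e' => ¬ isA I N e' ∧ isB I N e' ∧ e'.2 = e.2) := by
      rw [mem_filter]; exact ⟨heMN, hnA, hB, rfl⟩
    have h2 := hGb2 e.2 e hedp
    rw [mem_filter] at h2
    have hA' : isA I M (Gb e.2 e) := G1 hM hN heMN hB h2.1 h2.2
    rw [hfe]
    exact ⟨h2.1, h2.2, notAowned_of_isAM hM.1 hN.1 h2.1 hA'⟩
  -- case C facts
  have hC_t : ∀ e ∈ M \ N, ¬ isA I N e → ¬ isB I N e →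
      f e ∈ N \ M ∧ I.lec (f e).2 = I.lec e.2 ∧ ¬ Aowned I M N (f e) ∧
        f e ∉ (((M \ N).filter (fun e' => I.lec e'.2 = I.lec e.2 ∧ ¬ isA I N e' ∧
          isB I N e')).image (fun e' => Gb e'.2 e')) := by
    intro e heMN hnA hnB
    have hfe : f e = Gc (I.lec e.2) e := by
      rw [hf]; simp only [if_neg hnA, if_neg hnB]
    have hedl : e ∈ (M \ N).filter
        (fun e' => I.lec e'.2 = I.lec e.2 ∧ ¬ isA I N e' ∧ ¬ isB I N e') := by
      rw [mem_filter]; exact ⟨heMN, rfl, hnA, hnB⟩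
    have h2 := hGc2 (I.lec e.2) e hedl
    rw [mem_sdiff] at h2
    obtain ⟨hin, hnotimg⟩ := h2
    rw [mem_filter] at hin
    rw [hfe]
    exact ⟨hin.1, hin.2.1, hin.2.2, hnotimg⟩
  refine ⟨f, ?_, ?_, ?_, ?_, ?_⟩
  · -- injectivity
    intro a ha b hb hab
    rw [Finset.mem_coe] at ha hb
    by_cases haA : isA I N a <;> by_cases hbA : isA I N b
    · -- A , A
      obtain ⟨_, ha1, _⟩ := hA_t a ha haA
      obtain ⟨hbNM, hb1, _⟩ := hA_t b hb hbA
      have h1 : a.1 = b.1 := by rw [← ha1, ← hb1, hab]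
      have h2 : a.2 = b.2 :=
        hM.1.2.1 a.1 a.2 b.2 (by simpa using (mem_sdiff.1 ha).1)
          (by rw [h1]; simpa using (mem_sdiff.1 hb).1)
      exact Prod.ext h1 h2
    · -- A , not A
      exfalso
      obtain ⟨_, _, haow⟩ := hA_t a ha haA
      by_cases hbB : isB I N b
      · obtain ⟨_, _, hbow⟩ := hB_t b hb hbA hbB
        rw [hab] at haow
        exact hbow haow
      · obtain ⟨_, _, hbow, _⟩ := hC_t b hb hbA hbB
        rw [hab] at haow
        exact hbow haow
    · -- not A , A
      exfalso
      obtain ⟨_, _, hbow⟩ := hA_t b hb hbA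
      by_cases haB : isB I N a
      · obtain ⟨_, _, haow⟩ := hB_t a ha haA haB
        rw [← hab] at hbow
        exact haow hbow
      · obtain ⟨_, _, haow, _⟩ := hC_t a ha haA haB
        rw [← hab] at hbow
        exact haow hbow
    · -- not A , not A
      by_cases haB : isB I N a <;> by_cases hbB : isB I N b
      · -- B , B
        obtain ⟨_, ha2, _⟩ := hB_t a ha haA haB
        obtain ⟨_, hb2, _⟩ := hB_t b hb hbA hbB
        have hfa : f a = Gb a.2 a := by rw [hf]; simp only [if_neg haA, if_pos haB]
        have hfb : f b = Gb b.2 b := by rw [hf]; simp only [if_neg hbA, if_pos hbB]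
        have hab2 : a.2 = b.2 := by rw [← ha2, ← hb2, hab]
        have hamem : a ∈ (M \ N).filter
            (fun e => ¬ isA I N e ∧ isB I N e ∧ e.2 = a.2) := by
          rw [mem_filter]; exact ⟨ha, haA, haB, rfl⟩
        have hbmem : b ∈ (M \ N).filter
            (fun e => ¬ isA I N e ∧ isB I N e ∧ e.2 = a.2) := by
          rw [mem_filter]; exact ⟨hb, hbA, hbB, hab2.symm⟩
        refine hGb1 a.2 (Finset.mem_coe.2 hamem) (Finset.mem_coe.2 hbmem) ?_
        have hgb : Gb a.2 b = Gb b.2 b := by rw [hab2]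
        rw [hgb, ← hfa, ← hfb]
        exact hab
      · -- B , C : contradiction
        exfalso
        obtain ⟨_, ha2, _⟩ := hB_t a ha haA haB
        obtain ⟨_, hbl, _, hbimg⟩ := hC_t b hb hbA hbB
        have hfa : f a = Gb a.2 a := by rw [hf]; simp only [if_neg haA, if_pos haB]
        have hll : I.lec a.2 = I.lec b.2 := by
          have h1 : I.lec (f a).2 = I.lec a.2 := by rw [ha2]
          rw [← h1, hab, hbl]
        apply hbimg
        rw [← hab]
        rw [Finset.mem_image]
        refine ⟨a, ?_, hfa.symm⟩
        rw [mem_filter]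
        exact ⟨ha, hll, haA, haB⟩
      · -- C , B : contradiction
        exfalso
        obtain ⟨_, hb2, _⟩ := hB_t b hb hbA hbB
        obtain ⟨_, hal, _, haimg⟩ := hC_t a ha haA haB
        have hfb : f b = Gb b.2 b := by rw [hf]; simp only [if_neg hbA, if_pos hbB]
        have hll : I.lec b.2 = I.lec a.2 := by
          have h1 : I.lec (f b).2 = I.lec b.2 := by rw [hb2]
          rw [← h1, ← hab, hal]
        apply haimg
        rw [hab]
        rw [Finset.mem_image]
        refine ⟨b, ?_, hfb.symm⟩
        rw [mem_filter]
        exact ⟨hb, hll, hbA, hbB⟩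
      · -- C , C
        obtain ⟨_, hal, _, _⟩ := hC_t a ha haA haB
        obtain ⟨_, hbl, _, _⟩ := hC_t b hb hbA hbB
        have hfa : f a = Gc (I.lec a.2) a := by rw [hf]; simp only [if_neg haA, if_neg haB]
        have hfb : f b = Gc (I.lec b.2) b := by rw [hf]; simp only [if_neg hbA, if_neg hbB]
        have hll : I.lec a.2 = I.lec b.2 := by
          rw [← hal, ← hbl, hab]
        have hamem : a ∈ (M \ N).filter
            (fun e => I.lec e.2 = I.lec a.2 ∧ ¬ isA I N e ∧ ¬ isB I N e) := by
          rw [mem_filter]; exact ⟨ha, rfl, haA, haB⟩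
        have hbmem : b ∈ (M \ N).filter
            (fun e => I.lec e.2 = I.lec a.2 ∧ ¬ isA I N e ∧ ¬ isB I N e) := by
          rw [mem_filter]; exact ⟨hb, hll.symm, hbA, hbB⟩
        refine hGc1 (I.lec a.2) (Finset.mem_coe.2 hamem) (Finset.mem_coe.2 hbmem) ?_
        have hgc : Gc (I.lec a.2) b = Gc (I.lec b.2) b := by rw [hll]
        rw [hgc, ← hfa, ← hfb]
        exact hab
  · intro e he
    by_cases hA : isA I N e
    · exact (hA_t e he hA).1
    · by_cases hB : isB I N e
      · exact (hB_t e he hA hB).1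
      · exact (hC_t e he hA hB).1
  · intro e he hA
    refine ⟨(hA_t e he hA).2.1, ?_⟩
    exact (mem_sdiff.1 ((hA_t e he hA).1)).1
  · intro e he hA hB
    exact (hB_t e he hA hB).2.1
  · intro e he hA hB
    exact (hC_t e he hA hB).2.1

end RuralHospitalsAux5
section RuralHospitalsAux6

open SPAST Finset

set_option linter.unusedSectionVars false
set_option maxHeartbeats 1600000

variable {S P L : Type} [Fintype S] [Fintype P] [Fintype L]
  [DecidableEq S] [DecidableEq P] [DecidableEq L]

/-- the partner of a type-A edge is not of type A on the other side -/
lemma partner_type {I : SPAST S P L} {M N : Finset (S × P)}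
    (hM : I.SuperStable M) (hN : I.SuperStable N) {e e' : S × P}
    (he : e ∈ M \ N) (hA : isA I N e) (he'1 : e'.1 = e.1) (he' : e' ∈ N \ M) :
    isB I M e' ∨ isC I M e' := by
  have heM := mem_sdiff.1 he
  have he'N := mem_sdiff.1 he'
  have hnA' : ¬ isA I M e' := by
    rintro ⟨r', hr'M, hr'Q⟩
    obtain ⟨q, hqN, hqQ⟩ := hA
    have hr' : r' = e.2 := by
      refine hM.1.2.1 e'.1 r' e.2 hr'M ?_
      rw [he'1]
      simpa using heM.1
    have hq : q = e'.2 := by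
      refine hN.1.2.1 e.1 q e'.2 hqN ?_
      rw [← he'1]
      simpa using he'N.1
    rw [hr'] at hr'Q
    rw [hq] at hqQ
    rw [he'1] at hr'Q
    exact sQ_asymm hr'Q hqQ
  exact lemE hM (hN.1.1 e' he'N.1) he'N.2 hnA'

/-- Step I: if lecturer `k` is undersubscribed in `M`, the lecturer gets at most as
many students in `N` as in `M`. -/
lemma stepI {I : SPAST S P L} {M N : Finset (S × P)}
    (hM : I.SuperStable M) (hN : I.SuperStable N) {k : L}
    (hk : (lecAsg I M k).card < I.d k) :
    (lecAsg I N k).card ≤ (lecAsg I M k).card := by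
  obtain ⟨f, hfinj, hfmap, hfA, hfB, hfC⟩ := exists_succ hM hN
  obtain ⟨g, hginj, hgmap, _, _, _⟩ := exists_succ hN hM
  have hcards : (N \ M).card ≤ (M \ N).card :=
    Finset.card_le_card_of_injOn g (fun a ha => hgmap a ha) hginj
  have hpre := preimage_card hfinj (fun a ha => hfmap a ha) hcards
    (Finset.filter_subset (fun e' : S × P => I.lec e'.2 = k) (N \ M))
  have hbr : ((M \ N).filter (fun e => f e ∈ (N \ M).filter
      (fun e' : S × P => I.lec e'.2 = k))).card
      = ((M \ N).filter (fun e => I.lec (f e).2 = k)).card := by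
    apply card_filter_congr
    intro e he
    constructor
    · intro h
      exact (mem_filter.1 h).2
    · intro h
      exact mem_filter.2 ⟨hfmap e he, h⟩
  -- partitions of the preimage
  have s1 := card_partition2 (M \ N) (fun e => I.lec (f e).2 = k) (fun e => isA I N e)
  have s2 := card_partition2 (M \ N)
    (fun e => I.lec (f e).2 = k ∧ ¬ isA I N e) (fun e => isB I N e)
  have hYB : ((M \ N).filter
      (fun e => (I.lec (f e).2 = k ∧ ¬ isA I N e) ∧ isB I N e)).card
      = ((M \ N).filter (fun e => I.lec e.2 = k ∧ ¬ isA I N e ∧ isB I N e)).card := by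
    apply card_filter_congr
    intro e he
    constructor
    · rintro ⟨⟨hw, hA⟩, hB⟩
      refine ⟨?_, hA, hB⟩
      rw [← hw, hfB e he hA hB]
    · rintro ⟨hw, hA, hB⟩
      exact ⟨⟨by rw [hfB e he hA hB]; exact hw, hA⟩, hB⟩
  have hYC : ((M \ N).filter
      (fun e => (I.lec (f e).2 = k ∧ ¬ isA I N e) ∧ ¬ isB I N e)).card
      = ((M \ N).filter (fun e => I.lec e.2 = k ∧ ¬ isA I N e ∧ ¬ isB I N e)).card := by
    apply card_filter_congr
    intro e he
    constructor
    · rintro ⟨⟨hw, hA⟩, hB⟩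
      refine ⟨?_, hA, hB⟩
      rw [← hw, hfC e he hA hB]
    · rintro ⟨hw, hA, hB⟩
      exact ⟨⟨by rw [hfC e he hA hB]; exact hw, hA⟩, hB⟩
  -- the type-A part injects into the B*-edges at k
  have hYA : ((M \ N).filter (fun e => I.lec (f e).2 = k ∧ isA I N e)).card
      ≤ ((N \ M).filter (fun e' => I.lec e'.2 = k ∧ isB I M e')).card := by
    apply Finset.card_le_card_of_injOn f
    · intro e he
      rw [Finset.mem_coe, mem_filter] at he
      obtain ⟨heMN, hw, hA⟩ := he
      have hfeNM := hfmap e heMN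
      have hfe1 := (hfA e heMN hA).1
      rcases partner_type hM hN heMN hA hfe1 hfeNM with hB | hC
      · rw [Finset.mem_coe, mem_filter]
        exact ⟨hfeNM, hw, hB⟩
      · exfalso
        have := hC.1
        rw [hw] at this
        omega
    · exact hfinj.mono (fun x hx =>
        Finset.mem_coe.2 (Finset.mem_of_mem_filter x (Finset.mem_coe.1 hx)))
  have hBst : ((N \ M).filter (fun e' => I.lec e'.2 = k ∧ isB I M e')).card
      ≤ ((M \ N).filter (fun e => I.lec e.2 = k ∧ isA I N e)).card := by
    obtain ⟨φ, hφ1, hφ2⟩ := bstar_ex hM hN k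
    apply Finset.card_le_card_of_injOn φ
    · intro e' he'
      obtain ⟨hm, hsnd, hA⟩ := hφ2 e' he'
      rw [Finset.mem_coe, mem_filter] at he' ⊢
      refine ⟨hm, ?_, hA⟩
      rw [hsnd]
      exact he'.2.1
    · exact hφ1
  -- partition of the edges of M \ N at k
  have s3 := card_partition2 (M \ N) (fun e => I.lec e.2 = k) (fun e => isA I N e)
  have s4 := card_partition2 (M \ N)
    (fun e => I.lec e.2 = k ∧ ¬ isA I N e) (fun e => isB I N e)
  have hb1 : ((M \ N).filter
      (fun e => (I.lec e.2 = k ∧ ¬ isA I N e) ∧ isB I N e)).card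
      = ((M \ N).filter (fun e => I.lec e.2 = k ∧ ¬ isA I N e ∧ isB I N e)).card :=
    card_filter_congr (by intro e _; tauto)
  have hb2 : ((M \ N).filter
      (fun e => (I.lec e.2 = k ∧ ¬ isA I N e) ∧ ¬ isB I N e)).card
      = ((M \ N).filter (fun e => I.lec e.2 = k ∧ ¬ isA I N e ∧ ¬ isB I N e)).card :=
    card_filter_congr (by intro e _; tauto)
  have hb3 : ((M \ N).filter (fun e => I.lec (f e).2 = k ∧ isA I N e)).card
      = ((M \ N).filter (fun e => isA I N e ∧ I.lec (f e).2 = k)).card :=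
    card_filter_congr (by intro e _; tauto)
  have hb4 : ((M \ N).filter (fun e => I.lec e.2 = k ∧ isA I N e)).card
      = ((M \ N).filter (fun e => isA I N e ∧ I.lec e.2 = k)).card :=
    card_filter_congr (by intro e _; tauto)
  -- convert to lecAsg counts
  have c1 := card_split M N (fun e : S × P => I.lec e.2 = k)
  have c2 := card_split N M (fun e : S × P => I.lec e.2 = k)
  have hcomm : ((M ∩ N).filter (fun e : S × P => I.lec e.2 = k)).card
      = ((N ∩ M).filter (fun e : S × P => I.lec e.2 = k)).card := by
    rw [Finset.inter_comm]
  have aM : (lecAsg I M k).card = (M.filter (fun e : S × P => I.lec e.2 = k)).card :=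
    lecAsg_card hM.1 k
  have aN : (lecAsg I N k).card = (N.filter (fun e : S × P => I.lec e.2 = k)).card :=
    lecAsg_card hN.1 k
  -- s1 uses shape (w ∧ A); hYA/hb3 bridge
  omega

/-- Key per-project inequality, when the lecturer is undersubscribed in both matchings. -/
lemma keyP {I : SPAST S P L} {M N : Finset (S × P)}
    (hM : I.SuperStable M) (hN : I.SuperStable N) {k : L}
    (hkM : (lecAsg I M k).card < I.d k) (hkN : (lecAsg I N k).card < I.d k)
    {p : P} (hp : I.lec p = k) (hunder : (projAsg M p).card < I.c p) :
    (projAsg N p).card ≤ (projAsg M p).card := by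
  obtain ⟨f, hfinj, hfmap, hfA, hfB, hfC⟩ := exists_succ hM hN
  obtain ⟨g, hginj, hgmap, _, _, _⟩ := exists_succ hN hM
  have hcards : (N \ M).card ≤ (M \ N).card :=
    Finset.card_le_card_of_injOn g (fun a ha => hgmap a ha) hginj
  have hpre := preimage_card hfinj (fun a ha => hfmap a ha) hcards
    (Finset.filter_subset (fun e' : S × P => e'.2 = p) (N \ M))
  have hbr : ((M \ N).filter (fun e => f e ∈ (N \ M).filter
      (fun e' : S × P => e'.2 = p))).card
      = ((M \ N).filter (fun e => (f e).2 = p)).card := by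
    apply card_filter_congr
    intro e he
    constructor
    · intro h
      exact (mem_filter.1 h).2
    · intro h
      exact mem_filter.2 ⟨hfmap e he, h⟩
  have s1 := card_partition2 (M \ N) (fun e => (f e).2 = p) (fun e => isA I N e)
  have s2 := card_partition2 (M \ N)
    (fun e => (f e).2 = p ∧ ¬ isA I N e) (fun e => isB I N e)
  -- the type-A part is empty since p and k are undersubscribed in M
  have hAempty : ((M \ N).filter (fun e => (f e).2 = p ∧ isA I N e)).card = 0 := by
    rw [Finset.card_eq_zero, Finset.filter_eq_empty_iff]
    intro e he
    rintro ⟨hw, hA⟩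
    have hfeNM := hfmap e he
    have hfe1 := (hfA e he hA).1
    rcases partner_type hM hN he hA hfe1 hfeNM with hB | hC
    · have := hB.1
      rw [hw] at this
      omega
    · have := hC.1
      rw [hw, hp] at this
      omega
  -- the type-C part is empty since k is undersubscribed in N
  have hCempty : ((M \ N).filter
      (fun e => ((f e).2 = p ∧ ¬ isA I N e) ∧ ¬ isB I N e)).card = 0 := by
    rw [Finset.card_eq_zero, Finset.filter_eq_empty_iff]
    intro e he
    rintro ⟨⟨hw, hA⟩, hB⟩
    have heM := mem_sdiff.1 he
    have hC : isC I N e := by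
      rcases lemE hN (hM.1.1 e heM.1) heM.2 hA with hB' | hC'
      · exact absurd hB' hB
      · exact hC'
    have hlec : I.lec e.2 = k := by
      have h1 := hfC e he hA hB
      rw [← h1, hw, hp]
    have := hC.1
    rw [hlec] at this
    omega
  -- the type-B part is bounded by the edges of M \ N at p
  have hBbound : ((M \ N).filter
      (fun e => ((f e).2 = p ∧ ¬ isA I N e) ∧ isB I N e)).card
      ≤ ((M \ N).filter (fun e : S × P => e.2 = p)).card := by
    apply Finset.card_le_card
    intro e he
    rw [mem_filter] at he ⊢
    refine ⟨he.1, ?_⟩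
    rw [← he.2.1.1, hfB e he.1 he.2.1.2 he.2.2]
  have c1 := card_split M N (fun e : S × P => e.2 = p)
  have c2 := card_split N M (fun e : S × P => e.2 = p)
  have hcomm : ((M ∩ N).filter (fun e : S × P => e.2 = p)).card
      = ((N ∩ M).filter (fun e : S × P => e.2 = p)).card := by
    rw [Finset.inter_comm]
  have bM : (projAsg M p).card = (M.filter (fun e : S × P => e.2 = p)).card :=
    projAsg_card M p
  have bN : (projAsg N p).card = (N.filter (fun e : S × P => e.2 = p)).card :=
    projAsg_card N p
  omega

end RuralHospitalsAux6
open SPAST in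
theorem super_stable_project_counts_eq {S P L : Type} [Fintype S] [Fintype P] [Fintype L]
    [DecidableEq S] [DecidableEq P] [DecidableEq L]
    (I : SPAST S P L) (M1 M2 : Finset (S × P))
    (h1 : SuperStable I M1) (h2 : SuperStable I M2)
    (k : L) (hk : (lecAsg I M1 k).card < I.d k) (p : P) (hp : I.lec p = k) :
    (projAsg M1 p).card = (projAsg M2 p).card := by
  have hstep : (lecAsg I M2 k).card ≤ (lecAsg I M1 k).card := stepI h1 h2 hk
  have hk2 : (lecAsg I M2 k).card < I.d k := lt_of_le_of_lt hstep hk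
  have hb1 : (projAsg M1 p).card ≤ I.c p := by
    rw [projAsg_card]; exact h1.1.2.2.1 p
  have hb2 : (projAsg M2 p).card ≤ I.c p := by
    rw [projAsg_card]; exact h2.1.2.2.1 p
  rcases lt_or_eq_of_le hb1 with h1u | h1f
  · have hle := keyP h1 h2 hk hk2 hp h1u
    rcases lt_or_eq_of_le hb2 with h2u | h2f
    · have hge := keyP h2 h1 hk2 hk hp h2u
      omega
    · omega
  · rcases lt_or_eq_of_le hb2 with h2u | h2f
    · have hge := keyP h2 h1 hk2 hk hp h2u
      omega
    · omega
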